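/- Let n ≥ 1 and λ = l_1Λ_1+···+l_nΛ_n with l_i ≥ 0, and encode monomials in M(λ) by exponent families (b_k^i) (b_k^i ≥ 0 for 1 ≤ i ≤ n, i ≤ k ≤ n+1) satisfying ∑_{j=i}^{n+1} b_j^i = ∑_{k=i}^n l_k and ∑_{k=0}^{j} b_{i+k}^i ≥ ∑_{k=0}^{j} b_{i+1+k}^{i+1} for 0 ≤ j ≤ n-1, 1 ≤ i ≤ n−max{1,j}. Fix i ∈ {1,…,n}. Form the word over {0,1} obtained by reading, in the order m = 1, 2, …, n (listing for each m the component for k = n+1 down to k = m), b_{i+1}^m many 1's for the component X_{i+1}(-m) and b_i^m many 0's for the component X_i(-m) (ignoring all other components); after cancelling all (0,1) pairs, suppose the leftmost surviving 0 lies in the component X_i(-m_0). Then replacing b_i^{m_0} by b_i^{m_0} − 1 and b_{i+1}^{m_0} by b_{i+1}^{m_0} + 1 yields a family again satisfying all the defining conditions of M(λ). -/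

import Mathlib

open Finset List

/-- Row sums `l_i + ⋯ + l_n` (zero outside `1 ≤ i ≤ n`). -/
def rowLen (n : ℕ) (l : ℕ → ℕ) (i : ℕ) : ℕ :=
  if 1 ≤ i ∧ i ≤ n then ∑ k ∈ Finset.Icc i n, l k else 0

/-- The defining conditions of `M(λ)` on an exponent family `(b_k^i)`
(encoded `b k i`): support in `1 ≤ i ≤ n`, `i ≤ k ≤ n+1`; row sums
`∑_{j=i}^{n+1} b_j^i = ∑_{k=i}^n l_k`; and partial-sum dominance
`∑_{k=0}^{j} b_{i+k}^i ≥ ∑_{k=0}^{j} b_{i+1+k}^{i+1}` for `0 ≤ j ≤ n-1`,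
`1 ≤ i ≤ n - max 1 j`. -/
def MlaCond (n : ℕ) (l : ℕ → ℕ) (b : ℕ → ℕ → ℕ) : Prop :=
  (∀ k i, ¬(1 ≤ i ∧ i ≤ n ∧ i ≤ k ∧ k ≤ n + 1) → b k i = 0) ∧
  (∀ i, 1 ≤ i → i ≤ n → ∑ j ∈ Finset.Icc i (n + 1), b j i = rowLen n l i) ∧
  (∀ j, j ≤ n - 1 → ∀ i, 1 ≤ i → i ≤ n - max 1 j →
    ∑ k ∈ Finset.range (j + 1), b (i + 1 + k) (i + 1)
      ≤ ∑ k ∈ Finset.range (j + 1), b (i + k) i)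

/-- The tagged `i`-signature word of `(b_k^i)`: reading `m = 1, 2, …, n`
(components `X_{n+1}(-m), …, X_m(-m)`, so within each `m` the `1`s from
`X_{i+1}(-m)` precede the `0`s from `X_i(-m)`), write `b_{i+1}^m` many `1`s
(`true`) and `b_i^m` many `0`s (`false`), each tagged with its component `m`. -/
def sigWord (n i : ℕ) (b : ℕ → ℕ → ℕ) : List (Bool × ℕ) :=
  (List.range n).flatMap fun m' =>
    List.replicate (b (i + 1) (m' + 1)) (true, m' + 1) ++
    List.replicate (b i (m' + 1)) (false, m' + 1)

/-- One cancellation step on tagged words: delete an adjacent `(0,1)`-pair. -/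
def SigStep (u v : List (Bool × ℕ)) : Prop :=
  ∃ (xs ys : List (Bool × ℕ)) (m₁ m₂ : ℕ),
    u = xs ++ (false, m₁) :: (true, m₂) :: ys ∧ v = xs ++ ys

/-- A tagged word is reduced when no cancellation is possible. -/
def SigReduced (u : List (Bool × ℕ)) : Prop := ∀ v, ¬ SigStep u v

/-! ### Stack-based canonical reduction -/

def redStep : List (Bool × ℕ) → (Bool × ℕ) → List (Bool × ℕ)
  | (false, _) :: s, (true, _) => s
  | s, x => x :: s

lemma redStep_false (s : List (Bool × ℕ)) (m : ℕ) :
    redStep s (false, m) = (false, m) :: s := by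
  rcases s with _ | ⟨⟨b, t⟩, s⟩
  · rfl
  · cases b <;> rfl

lemma redStep_true_of_true (s : List (Bool × ℕ)) (hs : ∀ x ∈ s, x.1 = true) (m : ℕ) :
    redStep s (true, m) = (true, m) :: s := by
  rcases s with _ | ⟨⟨b, t⟩, s⟩
  · rfl
  · have : b = true := by simpa using hs (b, t) (by simp)
    subst this; rfl

lemma foldl_redStep_sigStep {u v : List (Bool × ℕ)} (h : SigStep u v) (s : List (Bool × ℕ)) :
    List.foldl redStep s u = List.foldl redStep s v := by
  obtain ⟨xs, ys, m₁, m₂, hu, hv⟩ := h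
  subst hu hv
  rw [List.foldl_append, List.foldl_append, List.foldl_cons, List.foldl_cons,
    redStep_false]
  rfl

lemma sigReduced_cons {x : Bool × ℕ} {r : List (Bool × ℕ)} (h : SigReduced (x :: r)) :
    SigReduced r := by
  rintro v ⟨xs, ys, m₁, m₂, h1, h2⟩
  exact h (x :: v) ⟨x :: xs, ys, m₁, m₂, by simp [h1], by simp [h2]⟩

lemma sigReduced_split {r : List (Bool × ℕ)} (h : SigReduced r) :
    ∃ p q, r = p ++ q ∧ (∀ x ∈ p, x.1 = true) ∧ (∀ x ∈ q, x.1 = false) := by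
  induction r with
  | nil => exact ⟨[], [], rfl, by simp, by simp⟩
  | cons x r ih =>
    obtain ⟨p, q, hpq, hp, hq⟩ := ih (sigReduced_cons h)
    cases hx : x.1 with
    | true =>
      refine ⟨x :: p, q, by simp [hpq], ?_, hq⟩
      intro y hy
      rcases List.mem_cons.mp hy with rfl | hy
      · exact hx
      · exact hp y hy
    | false =>
      rcases p with _ | ⟨y, p'⟩
      · refine ⟨[], x :: q, by simpa using hpq, by simp, ?_⟩
        intro z hz
        rcases List.mem_cons.mp hz with rfl | hz
        · exact hx
        · exact hq z hz
      · exfalso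
        have hy : y.1 = true := hp y (by simp)
        obtain ⟨xb, xm⟩ := x; obtain ⟨yb, ym⟩ := y
        simp only at hx hy
        subst hx hy
        exact h (p' ++ q) ⟨[], p' ++ q, xm, ym, by simp [hpq], rfl⟩

lemma foldl_trues (p : List (Bool × ℕ)) :
    ∀ s : List (Bool × ℕ), (∀ x ∈ s, x.1 = true) → (∀ x ∈ p, x.1 = true) →
      List.foldl redStep s p = p.reverse ++ s := by
  induction p with
  | nil => intro s _ _; simp
  | cons x p ih =>
    intro s hs hp
    have hx : x.1 = true := hp x (by simp)
    obtain ⟨xb, xm⟩ := x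
    simp only at hx; subst hx
    rw [List.foldl_cons, redStep_true_of_true s hs,
      ih ((true, xm) :: s) ?_ (fun y hy => hp y (by simp [hy]))]
    · simp
    · intro y hy
      rcases List.mem_cons.mp hy with rfl | hy
      · rfl
      · exact hs y hy

lemma foldl_falses (q : List (Bool × ℕ)) :
    ∀ s : List (Bool × ℕ), (∀ x ∈ q, x.1 = false) →
      List.foldl redStep s q = q.reverse ++ s := by
  induction q with
  | nil => intro s _; simp
  | cons x q ih =>
    intro s hq
    have hx : x.1 = false := hq x (by simp)
    obtain ⟨xb, xm⟩ := x
    simp only at hx; subst hx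
    rw [List.foldl_cons, redStep_false, ih _ (fun y hy => hq y (by simp [hy]))]
    simp

lemma foldl_reduced {r : List (Bool × ℕ)} (h : SigReduced r) :
    List.foldl redStep [] r = r.reverse := by
  obtain ⟨p, q, rfl, hp, hq⟩ := sigReduced_split h
  rw [List.foldl_append, foldl_trues p [] (by simp) hp, foldl_falses q _ hq]
  simp

lemma foldl_rep_true (m : ℕ) :
    ∀ (a : ℕ) (F T : List (Bool × ℕ)),
      (∀ x ∈ F, x.1 = false) → (∀ x ∈ T, x.1 = true) →
      ∃ T', (∀ x ∈ T', x.1 = true) ∧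
        List.foldl redStep (F ++ T) (List.replicate a (true, m)) = F.drop a ++ T' := by
  intro a
  induction a with
  | zero => intro F T _ hT; exact ⟨T, hT, by simp⟩
  | succ a ih =>
    intro F T hF hT
    rw [List.replicate_succ, List.foldl_cons]
    rcases F with _ | ⟨⟨fb, fm⟩, F'⟩
    · have h0 : redStep (([] : List (Bool × ℕ)) ++ T) (true, m) = ([] : List (Bool × ℕ)) ++ ((true, m) :: T) := by
        simpa using redStep_true_of_true T hT m
      rw [h0]
      obtain ⟨T', hT', h⟩ := ih [] ((true, m) :: T) (by simp)
        (by intro y hy; rcases List.mem_cons.mp hy with rfl | hy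
            · rfl
            · exact hT y hy)
      exact ⟨T', hT', by simpa using h⟩
    · have hf : fb = false := by simpa using hF (fb, fm) List.mem_cons_self
      subst hf
      have h0 : redStep (((false, fm) :: F') ++ T) (true, m) = F' ++ T := rfl
      rw [h0]
      obtain ⟨T', hT', h⟩ := ih F' T (fun y hy => hF y (List.mem_cons_of_mem _ hy)) hT
      exact ⟨T', hT', by simpa using h⟩

lemma foldl_rep_false (m : ℕ) :
    ∀ (c : ℕ) (s : List (Bool × ℕ)),
      List.foldl redStep s (List.replicate c (false, m)) =
        List.replicate c (false, m) ++ s := by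
  intro c
  induction c with
  | zero => intro s; simp
  | succ c ih =>
    intro s
    rw [List.replicate_succ, List.foldl_cons, redStep_false, ih, List.append_cons,
      ← List.replicate_succ', List.replicate_succ]

/-! ### The blockwise false-stack -/

def Gstack (i : ℕ) (b : ℕ → ℕ → ℕ) : ℕ → List (Bool × ℕ)
  | 0 => []
  | M + 1 => List.replicate (b i (M + 1)) (false, M + 1) ++
      (Gstack i b M).drop (b (i + 1) (M + 1))

lemma Gstack_mem {i : ℕ} {b : ℕ → ℕ → ℕ} :
    ∀ M, ∀ x ∈ Gstack i b M, x.1 = false ∧ 1 ≤ x.2 ∧ x.2 ≤ M ∧ 1 ≤ b i x.2 := by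
  intro M
  induction M with
  | zero => simp [Gstack]
  | succ M ih =>
    intro x hx
    rw [Gstack, List.mem_append] at hx
    rcases hx with hx | hx
    · obtain ⟨hn0, rfl⟩ := List.mem_replicate.mp hx
      exact ⟨rfl, Nat.succ_le_succ (Nat.zero_le _), le_refl _,
        Nat.one_le_iff_ne_zero.mpr hn0⟩
    · obtain ⟨h1, h2, h3, h4⟩ := ih x (List.mem_of_mem_drop hx)
      exact ⟨h1, h2, by omega, h4⟩

lemma Gstack_sorted {i : ℕ} {b : ℕ → ℕ → ℕ} :
    ∀ M, (Gstack i b M).Pairwise (fun x y => y.2 ≤ x.2) := by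
  intro M
  induction M with
  | zero => simp [Gstack]
  | succ M ih =>
    rw [Gstack, List.pairwise_append]
    refine ⟨List.pairwise_replicate.mpr (Or.inr (le_refl _)), ih.sublist (List.drop_sublist _ _), ?_⟩
    intro x hx y hy
    obtain ⟨-, rfl⟩ := List.mem_replicate.mp hx
    have := (Gstack_mem M y (List.mem_of_mem_drop hy)).2.2.1
    exact Nat.le_succ_of_le this

lemma Gstack_count {i : ℕ} {b : ℕ → ℕ → ℕ} :
    ∀ M m, (Gstack i b M).count (false, m) ≤ b i m := by
  intro M
  induction M with
  | zero => simp [Gstack]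
  | succ M ih =>
    intro m
    rw [Gstack, List.count_append]
    by_cases hm : m = M + 1
    · subst hm
      have h0 : (Gstack i b M).count (false, M + 1) = 0 := by
        rw [List.count_eq_zero]
        intro hmem
        have h : M + 1 ≤ M := (Gstack_mem M _ hmem).2.2.1
        omega
      have h1 : ((Gstack i b M).drop (b (i + 1) (M + 1))).count (false, M + 1) = 0 :=
        Nat.eq_zero_of_le_zero (h0 ▸ (List.drop_sublist _ _).count_le _)
      simp [h1, List.count_replicate]
    · have h1 : ((Gstack i b M).drop (b (i + 1) (M + 1))).count (false, m) ≤ b i m :=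
        le_trans ((List.drop_sublist _ _).count_le _) (ih m)
      have h2 : (List.replicate (b i (M + 1)) ((false : Bool), M + 1)).count (false, m) = 0 := by
        rw [List.count_eq_zero]
        intro hmem'
        exact hm (by simpa using List.eq_of_mem_replicate hmem')
      omega

lemma pairwise_getLast {l : List (Bool × ℕ)} (hp : l.Pairwise (fun x y => y.2 ≤ x.2))
    {z : Bool × ℕ} (hz : l.getLast? = some z) : ∀ x ∈ l, z.2 ≤ x.2 := by
  induction l with
  | nil => simp at hz
  | cons a l ih =>
    rcases l with _ | ⟨c, l'⟩
    · simp only [List.getLast?_singleton, Option.some.injEq] at hz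
      subst hz
      intro x hx
      simp at hx
      subst hx
      exact le_refl _
    · have hz' : (c :: l').getLast? = some z := by
        rw [List.getLast?_cons_cons] at hz
        exact hz
      intro x hx
      rcases List.mem_cons.mp hx with rfl | hx
      · have hzmem : z ∈ c :: l' := List.mem_of_mem_getLast? hz'
        exact List.rel_of_pairwise_cons hp hzmem
      · exact ih (List.Pairwise.of_cons hp) hz' x hx

lemma Gstack_key {i : ℕ} {b : ℕ → ℕ → ℕ} :
    ∀ M μ, (Gstack i b M).getLast? = some (false, μ) → μ < M →
      b (i + 1) (μ + 1) < b i μ := by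
  intro M
  induction M with
  | zero => simp [Gstack]
  | succ M ih =>
    intro μ hlast hμ
    rw [Gstack] at hlast
    rcases eq_or_ne ((Gstack i b M).drop (b (i + 1) (M + 1))) [] with hDe | hDne
    · rw [hDe, List.append_nil] at hlast
      have hmem : ((false : Bool), μ) ∈ List.replicate (b i (M + 1)) ((false : Bool), M + 1) :=
        List.mem_of_mem_getLast? hlast
      obtain ⟨-, h⟩ := List.mem_replicate.mp hmem
      simp at h
      omega
    · obtain ⟨w, hw⟩ := List.getLast?_isSome.mpr hDne |> Option.isSome_iff_exists.mp
      have hw2 : (List.replicate (b i (M + 1)) ((false : Bool), M + 1) ++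
          (Gstack i b M).drop (b (i + 1) (M + 1))).getLast? = some w :=
        List.mem_getLast?_append_of_mem_getLast? hw
      rw [hlast] at hw2
      have hwz : w = (false, μ) := by simpa using hw2.symm
      subst hwz
      have h1 : (Gstack i b M).getLast? = some (false, μ) := by
        have hsplit : Gstack i b M = (Gstack i b M).take (b (i + 1) (M + 1)) ++
            (Gstack i b M).drop (b (i + 1) (M + 1)) := (List.take_append_drop _ _).symm
        rw [hsplit]
        exact List.mem_getLast?_append_of_mem_getLast? hw
      rcases lt_or_ge μ M with h | h
      · exact ih μ h1 h
      · have hμM : μ = M := by omega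
        rw [hμM]
        have hlen : b (i + 1) (M + 1) < (Gstack i b M).length := by
          by_contra h'
          push_neg at h'
          exact hDne (List.drop_eq_nil_of_le h')
        have hall : ∀ x ∈ Gstack i b M, ((false : Bool), M) = x := by
          intro x hx
          obtain ⟨hx1, -, hx3, -⟩ := Gstack_mem M x hx
          have hx2 : M ≤ x.2 := by
            have := pairwise_getLast (Gstack_sorted M) h1 x hx
            omega
          obtain ⟨xb, xm⟩ := x
          simp only at hx1 hx2 hx3
          subst hx1
          have : xm = M := by omega
          subst this; rfl
        have hcount : (Gstack i b M).count ((false : Bool), M) = (Gstack i b M).length :=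
          List.count_eq_length.mpr hall
        have := Gstack_count (i := i) (b := b) M M
        omega

lemma foldl_sigWord (i : ℕ) (b : ℕ → ℕ → ℕ) :
    ∀ M, ∃ T, (∀ x ∈ T, x.1 = true) ∧
      List.foldl redStep [] ((List.range M).flatMap fun m' =>
        List.replicate (b (i + 1) (m' + 1)) (true, m' + 1) ++
        List.replicate (b i (m' + 1)) (false, m' + 1)) = Gstack i b M ++ T := by
  intro M
  induction M with
  | zero => exact ⟨[], by simp, by simp [Gstack]⟩
  | succ M ih =>
    obtain ⟨T, hT, hfold⟩ := ih
    obtain ⟨T', hT', h1⟩ := foldl_rep_true (M + 1) (b (i + 1) (M + 1)) (Gstack i b M) T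
      (fun x hx => (Gstack_mem M x hx).1) hT
    refine ⟨T', hT', ?_⟩
    rw [List.range_succ, List.flatMap_append, List.foldl_append, hfold]
    simp only [List.flatMap_cons, List.flatMap_nil, List.append_nil]
    rw [List.foldl_append, h1, foldl_rep_false, Gstack]
    simp

/-! ### Sum helper -/

lemma sum_update_two {s : Finset ℕ} {f g : ℕ → ℕ} {a c : ℕ} (ha : a ∈ s) (hc : c ∈ s)
    (hne : a ≠ c) (hfa : 1 ≤ f a) (hga : g a = f a - 1) (hgc : g c = f c + 1)
    (hother : ∀ x ∈ s, x ≠ a → x ≠ c → g x = f x) :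
    ∑ x ∈ s, g x = ∑ x ∈ s, f x := by
  have hc' : c ∈ s.erase a := Finset.mem_erase.mpr ⟨Ne.symm hne, hc⟩
  rw [← Finset.sum_erase_add s g ha, ← Finset.sum_erase_add s f ha,
    ← Finset.sum_erase_add _ g hc', ← Finset.sum_erase_add _ f hc']
  have h0 : ∑ x ∈ (s.erase a).erase c, g x = ∑ x ∈ (s.erase a).erase c, f x := by
    refine Finset.sum_congr rfl fun x hx => ?_
    have hx2 := Finset.mem_erase.mp hx
    have hx3 := Finset.mem_erase.mp hx2.2
    exact hother x hx3.2 hx3.1 hx2.1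
  omega

lemma foldl_redStep_rtg {u v : List (Bool × ℕ)} (h : Relation.ReflTransGen SigStep u v) :
    List.foldl redStep [] u = List.foldl redStep [] v := by
  induction h with
  | refl => rfl
  | tail h₁ h₂ ih => rw [ih, foldl_redStep_sigStep h₂]

/-- Closure of `M(λ)` under `f̃_i`: if, after cancelling all `(0,1)`-pairs in
the `i`-signature word of `b ∈ M(λ)`, the leftmost surviving `0` is tagged
with component `m₀` (i.e. comes from `X_i(-m₀)`), then the family obtained by
replacing `b_i^{m₀}` with `b_i^{m₀} − 1` and `b_{i+1}^{m₀}` with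
`b_{i+1}^{m₀} + 1` again satisfies all the defining conditions of `M(λ)`. -/
theorem Mla_closed_f (n : ℕ) (hn : 1 ≤ n) (l : ℕ → ℕ) (b : ℕ → ℕ → ℕ)
    (i : ℕ) (hi1 : 1 ≤ i) (hi2 : i ≤ n) (hb : MlaCond n l b)
    (r : List (Bool × ℕ)) (m₀ : ℕ)
    (hr : Relation.ReflTransGen SigStep (sigWord n i b) r)
    (hred : SigReduced r)
    (hm₀ : ∃ p q : List (Bool × ℕ),
      r = p ++ (false, m₀) :: q ∧ ∀ x ∈ p, x.1 = true) :
    MlaCond n l (fun k m =>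
      if k = i ∧ m = m₀ then b i m₀ - 1
      else if k = i + 1 ∧ m = m₀ then b (i + 1) m₀ + 1
      else b k m) := by
  obtain ⟨hsupp, hrow, hdom⟩ := hb
  -- Step 1: canonical reduction is invariant
  have hfold_inv : List.foldl redStep [] (sigWord n i b) = List.foldl redStep [] r :=
    foldl_redStep_rtg hr
  obtain ⟨T, hT, hG⟩ := foldl_sigWord i b n
  have hr2 : r.reverse = Gstack i b n ++ T := by
    rw [← foldl_reduced hred, ← hfold_inv]; exact hG
  have hr3 : r = T.reverse ++ (Gstack i b n).reverse := by
    have := congrArg List.reverse hr2; simpa using this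
  obtain ⟨p, q, hpq, hp⟩ := hm₀
  -- Step 2: the last element of the stack is (false, m₀)
  have hGlast : (Gstack i b n).getLast? = some (false, m₀) := by
    have heq : T.reverse ++ (Gstack i b n).reverse = p ++ (false, m₀) :: q := by
      rw [← hr3, hpq]
    have hGrev : (Gstack i b n).reverse = (false, m₀) :: q := by
      rcases List.append_eq_append_iff.mp heq with ⟨a', h1, h2⟩ | ⟨c', h1, h2⟩
      · rcases a' with _ | ⟨y, a''⟩
        · simpa using h2
        · exfalso
          have hy1 : y.1 = true := hp y (by simp [h1])
          have hy2 : y.1 = false :=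
            (Gstack_mem n y (by
              have : y ∈ (Gstack i b n).reverse := by rw [h2]; simp
              simpa using this)).1
          rw [hy1] at hy2; exact Bool.noConfusion hy2
      · rcases c' with _ | ⟨y, c''⟩
        · simpa using h2.symm
        · exfalso
          have hy1 : y.1 = true := by
            have : y ∈ T.reverse := by rw [h1]; simp
            exact hT y (by simpa using this)
          have hy2 : y = (false, m₀) := by
            have := h2
            simp only [List.cons_append] at this
            exact (List.cons_eq_cons.mp this.symm).1
          rw [hy2] at hy1; exact Bool.noConfusion hy1
    rw [← List.head?_reverse, hGrev]
    rfl
  have hmem : ((false : Bool), m₀) ∈ Gstack i b n := List.mem_of_mem_getLast? hGlast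
  obtain ⟨-, hm1, hmn, hbim⟩ := Gstack_mem n _ hmem
  simp only at hm1 hmn hbim
  have hm₀i : m₀ ≤ i := by
    by_contra h
    have h0 := hsupp i m₀ (by omega)
    omega
  have hkey : b (i + 1) (m₀ + 1) < b i m₀ := by
    rcases lt_or_ge m₀ n with h | h
    · exact Gstack_key n m₀ hGlast h
    · have hm₀n : m₀ = n := by omega
      have h0 : b (i + 1) (n + 1) = 0 := hsupp (i + 1) (n + 1) (by omega)
      rw [hm₀n] at hbim ⊢
      rw [h0]
      omega
  set b' : ℕ → ℕ → ℕ := fun k m =>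
      if k = i ∧ m = m₀ then b i m₀ - 1
      else if k = i + 1 ∧ m = m₀ then b (i + 1) m₀ + 1
      else b k m with hb'def
  have hb'1 : ∀ k m, m ≠ m₀ → b' k m = b k m := by
    intro k m h
    simp [hb'def, h]
  have hb'2 : ∀ k, k ≠ i → k ≠ i + 1 → b' k m₀ = b k m₀ := by
    intro k h1 h2
    simp [hb'def, h1, h2]
  have hb'3 : b' i m₀ = b i m₀ - 1 := by
    simp [hb'def]
  have hb'4 : b' (i + 1) m₀ = b (i + 1) m₀ + 1 := by
    simp [hb'def]
  refine ⟨?_, ?_, ?_⟩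
  · -- support
    intro k m hkm
    by_cases h1 : k = i ∧ m = m₀
    · exact absurd (by obtain ⟨rfl, rfl⟩ := h1; exact ⟨hm1, hmn, hm₀i, by omega⟩) hkm
    · by_cases h2 : k = i + 1 ∧ m = m₀
      · exact absurd (by obtain ⟨rfl, rfl⟩ := h2; exact ⟨hm1, hmn, by omega, by omega⟩) hkm
      · have he : b' k m = b k m := by
          simp [hb'def, h1, h2]
        rw [he]
        exact hsupp k m hkm
  · -- row sums
    intro m h1m hmn'
    by_cases hm : m = m₀
    · subst hm
      rw [← hrow m h1m hmn']
      refine sum_update_two (a := i) (c := i + 1)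
        (Finset.mem_Icc.mpr ⟨hm₀i, by omega⟩)
        (Finset.mem_Icc.mpr ⟨by omega, by omega⟩) (by omega) hbim hb'3 hb'4 ?_
      intro x _ hx1 hx2
      exact hb'2 x hx1 hx2
    · rw [← hrow m h1m hmn']
      exact Finset.sum_congr rfl fun k _ => hb'1 k m hm
  · -- dominance
    intro j hj i' h1i' hi'n
    have hdom' := hdom j hj i' h1i' hi'n
    by_cases hB : i' = m₀
    · subst hB
      -- RHS row is m₀; LHS row m₀+1 unchanged
      have hTeq : ∑ k ∈ Finset.range (j + 1), b' (i' + 1 + k) (i' + 1) =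
          ∑ k ∈ Finset.range (j + 1), b (i' + 1 + k) (i' + 1) :=
        Finset.sum_congr rfl fun k _ => hb'1 _ _ (by omega)
      rw [hTeq]
      by_cases hw1 : i + 1 ≤ i' + j
      · -- both i and i+1 in the window: RHS unchanged
        have hS : ∑ k ∈ Finset.range (j + 1), b' (i' + k) i' =
            ∑ k ∈ Finset.range (j + 1), b (i' + k) i' := by
          refine sum_update_two (a := i - i') (c := i + 1 - i')
            (Finset.mem_range.mpr (by omega)) (Finset.mem_range.mpr (by omega))
            (by omega) ?_ ?_ ?_ ?_
          · have : i' + (i - i') = i := by omega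
            rw [this]; exact hbim
          · have h1 : i' + (i - i') = i := by omega
            rw [h1, hb'3]
          · have h1 : i' + (i + 1 - i') = i + 1 := by omega
            rw [h1, hb'4]
          · intro x _ hx1 hx2
            exact hb'2 (i' + x) (by omega) (by omega)
        rw [hS]; exact hdom'
      · by_cases hw2 : i ≤ i' + j
        · -- the strict case: i' + j = i
          have hji : i' + j = i := by omega
          rw [Finset.sum_range_succ, Finset.sum_range_succ]
          have hS0 : ∑ k ∈ Finset.range j, b' (i' + k) i' =
              ∑ k ∈ Finset.range j, b (i' + k) i' := by
            refine Finset.sum_congr rfl fun k hk => ?_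
            have hk' := Finset.mem_range.mp hk
            exact hb'2 (i' + k) (by omega) (by omega)
          rw [hS0, hji, hb'3]
          have hlast : b (i' + 1 + j) (i' + 1) = b (i + 1) (i' + 1) := by
            have h1 : i' + 1 + j = i + 1 := by omega
            rw [h1]
          rw [hlast]
          rcases Nat.eq_zero_or_pos j with rfl | hjpos
          · simp only [Finset.range_zero, Finset.sum_empty]
            omega
          · have hdom2 := hdom (j - 1) (by omega) i' hm1 ?_
            · have hj1 : j - 1 + 1 = j := by omega
              rw [hj1] at hdom2
              omega
            · have h1 : max 1 (j - 1) ≤ max 1 j := max_le_max (le_refl 1) (by omega)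
              omega
        · -- no affected index in the window
          have hS : ∑ k ∈ Finset.range (j + 1), b' (i' + k) i' =
              ∑ k ∈ Finset.range (j + 1), b (i' + k) i' := by
            refine Finset.sum_congr rfl fun k hk => ?_
            have hk' := Finset.mem_range.mp hk
            exact hb'2 (i' + k) (by omega) (by omega)
          rw [hS]; exact hdom'
    · -- RHS row unchanged
      have hSeq : ∑ k ∈ Finset.range (j + 1), b' (i' + k) i' =
          ∑ k ∈ Finset.range (j + 1), b (i' + k) i' :=
        Finset.sum_congr rfl fun k _ => hb'1 _ _ hB
      rw [hSeq]
      by_cases hA : i' + 1 = m₀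
      · -- LHS row is m₀
        by_cases hw1 : i + 1 ≤ m₀ + j
        · have hT2 : ∑ k ∈ Finset.range (j + 1), b' (i' + 1 + k) (i' + 1) =
              ∑ k ∈ Finset.range (j + 1), b (i' + 1 + k) (i' + 1) := by
            refine sum_update_two (a := i - m₀) (c := i + 1 - m₀)
              (Finset.mem_range.mpr (by omega)) (Finset.mem_range.mpr (by omega))
              (by omega) ?_ ?_ ?_ ?_
            · have h1 : i' + 1 + (i - m₀) = i := by omega
              rw [h1, hA]; exact hbim
            · have h1 : i' + 1 + (i - m₀) = i := by omega
              rw [h1, hA, hb'3]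
            · have h1 : i' + 1 + (i + 1 - m₀) = i + 1 := by omega
              rw [h1, hA, hb'4]
            · intro x _ hx1 hx2
              rw [hA]
              exact hb'2 (m₀ + x) (by omega) (by omega)
          rw [hT2]; exact hdom'
        · -- only possible decrease on LHS
          refine le_trans (Finset.sum_le_sum fun k hk => ?_) hdom'
          have hk' := Finset.mem_range.mp hk
          by_cases hki : i' + 1 + k = i
          · rw [hki, hA, hb'3]
            omega
          · rw [hA]
            rw [hb'2 (m₀ + k) (by omega) (by omega)]
      · -- neither row affected
        have hT2 : ∑ k ∈ Finset.range (j + 1), b' (i' + 1 + k) (i' + 1) =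
            ∑ k ∈ Finset.range (j + 1), b (i' + 1 + k) (i' + 1) :=
          Finset.sum_congr rfl fun k _ => hb'1 _ _ hA
        rw [hT2]; exact hdom'
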